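/- Let d > 1 and β > β(d). Then h(β,d) < d·φ(h⁺), where h(β,d) is the critical field of the Ising model on the Cayley tree and h⁺ is the positive fixed point of x ↦ d·φ(x). -/

import Mathlib

/-- The inverse hyperbolic tangent, arctanh x = (1/2)·log((1+x)/(1-x)). -/
noncomputable def artanh (x : ℝ) : ℝ := (1 / 2) * Real.log ((1 + x) / (1 - x))

/-- The one-step Ising tree recursion function φ(x) = arctanh(tanh β · tanh x). -/
noncomputable def phi (β x : ℝ) : ℝ := artanh (Real.tanh β * Real.tanh x)

/-- The critical field h(β,d) of the Ising model on the Cayley tree, where w = tanh β. -/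
noncomputable def critField (β d : ℝ) : ℝ :=
  d * artanh (Real.sqrt ((d * Real.tanh β - 1) / (d * (Real.tanh β)⁻¹ - 1)))
    - artanh (Real.sqrt ((d - (Real.tanh β)⁻¹) / (d - Real.tanh β)))

lemma artanh_zero : artanh 0 = 0 := by simp [artanh]

lemma artanh_lt_artanh {a b : ℝ} (ha : -1 < a) (hab : a < b) (hb : b < 1) :
    artanh a < artanh b := by
  have h1a : 0 < 1 + a := by linarith
  have h1b : 0 < 1 - b := by linarith
  have h2a : 0 < 1 - a := by linarith
  have h2b : 0 < 1 + b := by linarith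
  unfold artanh
  have hlog : Real.log ((1 + a) / (1 - a)) < Real.log ((1 + b) / (1 - b)) := by
    apply Real.log_lt_log (by positivity)
    rw [div_lt_div_iff₀ h2a h1b]
    nlinarith
  linarith

lemma artanh_pos {a : ℝ} (h0 : 0 < a) (h1 : a < 1) : 0 < artanh a := by
  have := artanh_lt_artanh (a := 0) (b := a) (by norm_num) h0 h1
  rwa [artanh_zero] at this

lemma tanh_pos {x : ℝ} (hx : 0 < x) : 0 < Real.tanh x := by
  rw [Real.tanh_eq_sinh_div_cosh]
  exact div_pos (by rwa [Real.sinh_pos_iff]) (Real.cosh_pos x)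

lemma tanh_lt_one (x : ℝ) : Real.tanh x < 1 := by
  rw [Real.tanh_eq_sinh_div_cosh, div_lt_one (Real.cosh_pos x)]
  have := Real.cosh_sub_sinh x
  have := Real.exp_pos (-x)
  linarith

lemma artanh_tanh (x : ℝ) : artanh (Real.tanh x) = x := by
  have hc := Real.cosh_pos x
  have hkey : (1 + Real.tanh x) / (1 - Real.tanh x) = Real.exp x * Real.exp x := by
    rw [Real.tanh_eq_sinh_div_cosh, Real.sinh_eq, Real.cosh_eq, Real.exp_neg]
    have he := Real.exp_pos x
    have hne : Real.exp x ≠ 0 := ne_of_gt he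
    rw [Real.cosh_eq, Real.exp_neg] at hc
    field_simp
    ring
  unfold artanh
  rw [hkey, ← Real.exp_add, Real.log_exp]
  ring

lemma hasDerivAt_artanh {t : ℝ} (h1 : -1 < t) (h2 : t < 1) :
    HasDerivAt artanh (1 / (1 - t ^ 2)) t := by
  have hg : HasDerivAt (fun u : ℝ => (1 / 2) * (Real.log (1 + u) - Real.log (1 - u)))
      (1 / (1 - t ^ 2)) t := by
    have hd1 : HasDerivAt (fun u : ℝ => Real.log (1 + u)) (1 / (1 + t)) t := by
      have : HasDerivAt (fun u : ℝ => 1 + u) 1 t := (hasDerivAt_id t).const_add 1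
      simpa using this.log (by linarith)
    have hd2 : HasDerivAt (fun u : ℝ => Real.log (1 - u)) ((-1) / (1 - t)) t := by
      have : HasDerivAt (fun u : ℝ => 1 - u) (-1) t := (hasDerivAt_id t).const_sub 1
      simpa using this.log (by linarith)
    have := ((hd1.sub hd2).const_mul (1 / 2 : ℝ))
    convert this using 1 <;> try rfl
    have ha : (1 : ℝ) + t ≠ 0 := by linarith
    have hb : (1 : ℝ) - t ≠ 0 := by linarith
    have hc : (1 : ℝ) - t ^ 2 ≠ 0 := by nlinarith
    field_simp
    ring
  apply hg.congr_of_eventuallyEq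
  have hmem : Set.Ioo (-1 : ℝ) 1 ∈ nhds t := isOpen_Ioo.mem_nhds ⟨h1, h2⟩
  filter_upwards [hmem] with u hu
  have ha : 0 < 1 + u := by linarith [hu.1]
  have hb : 0 < 1 - u := by linarith [hu.2]
  unfold artanh
  rw [Real.log_div (by linarith) (by linarith)]

set_option maxHeartbeats 1000000 in
lemma aux_main (d w th : ℝ) (hd : 1 < d) (hw0 : 0 < w) (hw1 : w < 1)
    (hw : 1 < d * w) (hth0 : 0 < th) (hth1 : th < 1)
    (hfix : d * artanh (w * th) = artanh th) :
    d * artanh (Real.sqrt ((d * w - 1) / (d * w⁻¹ - 1)))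
      - artanh (Real.sqrt ((d - w⁻¹) / (d - w))) < d * artanh (w * th) := by
  have hd0 : (0 : ℝ) < d := by linarith
  have hdw : 0 < d - w := by linarith
  have hwne : w ≠ 0 := ne_of_gt hw0
  obtain ⟨tB2, htB2def⟩ : ∃ x : ℝ, x = (d - w⁻¹) / (d - w) := ⟨_, rfl⟩
  have hwinv : w⁻¹ < d := by
    have hww : w * w⁻¹ = 1 := mul_inv_cancel₀ hwne
    nlinarith
  have htB2pos : 0 < tB2 := htB2def ▸ div_pos (by linarith) hdw
  have htB2lt1 : tB2 < 1 := by
    rw [htB2def, div_lt_one hdw]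
    have : 1 < w⁻¹ := (one_lt_inv₀ hw0).mpr hw1
    linarith
  obtain ⟨tB, htBdef⟩ : ∃ x : ℝ, x = Real.sqrt tB2 := ⟨_, rfl⟩
  have htBpos : 0 < tB := htBdef ▸ Real.sqrt_pos.mpr htB2pos
  have htBlt1 : tB < 1 := by
    rw [htBdef, show (1:ℝ) = Real.sqrt 1 by simp]
    exact Real.sqrt_lt_sqrt (le_of_lt htB2pos) htB2lt1
  have htBsq : tB ^ 2 = tB2 := htBdef ▸ Real.sq_sqrt (le_of_lt htB2pos)
  have hkey : w * (d - w) * tB2 = d * w - 1 := by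
    rw [htB2def]
    field_simp
  -- the function F
  obtain ⟨F, hFdef⟩ : ∃ F : ℝ → ℝ, F = fun t => d * artanh (w * t) - artanh t := ⟨_, rfl⟩
  have hFderiv : ∀ t : ℝ, -1 < t → t < 1 →
      HasDerivAt F (d * ((1 / (1 - (w * t) ^ 2)) * w) - 1 / (1 - t ^ 2)) t := by
    intro t h1 h2
    have hwt1 : w * t < 1 := by nlinarith
    have hwt2 : -1 < w * t := by nlinarith
    have hmul : HasDerivAt (fun u : ℝ => w * u) w t := by
      simpa using (hasDerivAt_id t).const_mul w
    have h1' : HasDerivAt (fun u : ℝ => artanh (w * u)) ((1 / (1 - (w * t) ^ 2)) * w) t :=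
      (hasDerivAt_artanh hwt2 hwt1).comp t hmul
    rw [hFdef]
    exact (h1'.const_mul d).sub (hasDerivAt_artanh h1 h2)
  -- F is strictly monotone on [0, tB]
  have hmono : StrictMonoOn F (Set.Icc 0 tB) := by
    apply strictMonoOn_of_deriv_pos (convex_Icc 0 tB)
    · intro t ht
      have h1 : -1 < t := by linarith [ht.1]
      have h2 : t < 1 := lt_of_le_of_lt ht.2 htBlt1
      exact ((hFderiv t h1 h2).continuousAt).continuousWithinAt
    · intro t ht
      rw [interior_Icc] at ht
      have h1 : -1 < t := by linarith [ht.1]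
      have h2 : t < 1 := lt_trans ht.2 htBlt1
      rw [(hFderiv t h1 h2).deriv]
      have ht2 : t ^ 2 < tB2 := by
        rw [← htBsq]
        exact pow_lt_pow_left₀ ht.2 (le_of_lt ht.1) (by norm_num)
      have hpos1 : 0 < 1 - t ^ 2 := by nlinarith
      have hpos2 : 0 < 1 - (w * t) ^ 2 := by
        have h3 : 0 < (1 - w * t) * (1 + w * t) := by
          have := mul_pos hw0 ht.1
          apply mul_pos <;> nlinarith
        nlinarith
      have heq : d * ((1 / (1 - (w * t) ^ 2)) * w) = d * w / (1 - (w * t) ^ 2) := by ring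
      rw [heq, sub_pos, div_lt_div_iff₀ hpos1 hpos2]
      nlinarith [mul_pos (mul_pos hw0 hdw) (sub_pos.mpr ht2)]
  have hF0 : F 0 = 0 := by simp [hFdef, artanh_zero]
  have hFpos : ∀ t : ℝ, 0 < t → t ≤ tB → 0 < F t := by
    intro t h0 hle
    have := hmono (Set.left_mem_Icc.mpr (le_of_lt htBpos)) ⟨le_of_lt h0, hle⟩ h0
    rwa [hF0] at this
  have hFth : F th = 0 := by rw [hFdef]; simp only; rw [hfix, sub_self]
  have htB_lt : tB < th := by
    by_contra h
    push_neg at h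
    have := hFpos th hth0 h
    rw [hFth] at this; exact lt_irrefl 0 this
  -- identity for the first sqrt
  have hsq1 : Real.sqrt ((d * w - 1) / (d * w⁻¹ - 1)) = w * tB := by
    have harg : (d * w - 1) / (d * w⁻¹ - 1) = (w * tB) ^ 2 := by
      have h5 : (w * tB) ^ 2 = w ^ 2 * tB2 := by rw [mul_pow, htBsq]
      rw [h5, htB2def]
      have hne2 : d * w⁻¹ - 1 ≠ 0 := by
        have h4 : 1 < d * w⁻¹ := by
          rw [← div_eq_mul_inv, lt_div_iff₀ hw0]; linarith
        linarith
      field_simp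
    rw [harg, Real.sqrt_sq (le_of_lt (mul_pos hw0 htBpos))]
  -- final chain
  have hB : 0 < artanh tB := artanh_pos htBpos htBlt1
  have hwt : w * tB < w * th := mul_lt_mul_of_pos_left htB_lt hw0
  have hub : w * th < 1 := by
    have := mul_lt_mul_of_pos_left hth1 hw0
    nlinarith
  have hlb : -1 < w * tB := by nlinarith [mul_pos hw0 htBpos]
  have hmono2 : artanh (w * tB) < artanh (w * th) := artanh_lt_artanh hlb hwt hub
  rw [hsq1, ← htB2def, ← htBdef]
  nlinarith [hB, hmono2, hd0]

theorem stmt_9 (β d : ℝ) (hd : 1 < d) (hw : 1 < d * Real.tanh β)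
    (hp : ℝ) (hp_pos : 0 < hp) (hp_fix : d * phi β hp = hp) :
    critField β d < d * phi β hp := by
  have hw1 : Real.tanh β < 1 := tanh_lt_one β
  have hw0 : 0 < Real.tanh β := by nlinarith
  have hfix : d * artanh (Real.tanh β * Real.tanh hp) = artanh (Real.tanh hp) := by
    rw [artanh_tanh]
    exact hp_fix
  exact aux_main d (Real.tanh β) (Real.tanh hp) hd hw0 hw1 hw
    (tanh_pos hp_pos) (tanh_lt_one hp) hfix
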